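/- The Demazure operators satisfy the nil Coxeter relations as endomorphisms of R = ℂ[x_1,…,x_n]: (a) δ_i ∘ δ_i = 0 for all 1 ≤ i ≤ n−1; (b) δ_i ∘ δ_{i+1} ∘ δ_i = δ_{i+1} ∘ δ_i ∘ δ_{i+1} for all 1 ≤ i ≤ n−2; (c) δ_i ∘ δ_j = δ_j ∘ δ_i whenever |i − j| ≥ 2. -/

import Mathlib

open MvPolynomial

namespace DemazureAux11

variable {n : ℕ}

local notation "R'" => MvPolynomial (Fin (n + 1)) ℂ
local notation "K'" => FractionRing (MvPolynomial (Fin (n + 1)) ℂ)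

lemma demι_sub_ne {u v : Fin (n + 1)} (h : u ≠ v) :
    algebraMap R' K' (X u) - algebraMap R' K' (X v) ≠ 0 := by
  intro hEq
  exact h (X_injective (IsFractionRing.injective R' K' (sub_eq_zero.mp hEq)))

lemma demazure_key (D : Fin n → (R' → R'))
    (hD : ∀ (i : Fin n) (f : R'),
      D i f * (X i.castSucc - X i.succ) =
        rename (⇑(Equiv.swap i.castSucc i.succ)) f - f)
    (i : Fin n) (e : Equiv.Perm (Fin (n + 1))) (f : R') :
    algebraMap R' K' (rename (⇑e) (D i f)) =
      (algebraMap R' K' (rename (⇑(e * Equiv.swap i.castSucc i.succ)) f) -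
        algebraMap R' K' (rename (⇑e) f)) /
        (algebraMap R' K' (X (e i.castSucc)) - algebraMap R' K' (X (e i.succ))) := by
  rw [eq_div_iff (demι_sub_ne (fun h => (Fin.castSucc_lt_succ : i.castSucc < i.succ).ne (e.injective h)))]
  have hd : algebraMap R' K' (X (e i.castSucc)) - algebraMap R' K' (X (e i.succ)) =
      algebraMap R' K' (rename (⇑e) (X i.castSucc - X i.succ)) := by
    rw [map_sub, rename_X, rename_X, map_sub]
  rw [hd, ← map_mul, ← map_mul, hD, map_sub, rename_rename, ← Equiv.Perm.coe_mul, map_sub]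

lemma demazure_key1 (D : Fin n → (R' → R'))
    (hD : ∀ (i : Fin n) (f : R'),
      D i f * (X i.castSucc - X i.succ) =
        rename (⇑(Equiv.swap i.castSucc i.succ)) f - f)
    (i : Fin n) (f : R') :
    algebraMap R' K' (D i f) =
      (algebraMap R' K' (rename (⇑(Equiv.swap i.castSucc i.succ)) f) -
        algebraMap R' K' f) /
        (algebraMap R' K' (X i.castSucc) - algebraMap R' K' (X i.succ)) := by
  have h := demazure_key D hD i 1 f
  simpa [Equiv.Perm.coe_one, rename_id] using h

lemma dem_expand_side {K : Type*} [Field K] (a b c p q r : K)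
    (ha : a ≠ 0) (hb : b ≠ 0) (hc : c ≠ 0) :
    ((p / b - q / a) / c - (r / c - q / a) / b) / a =
      (p - r) / (a * b * c) + q * (c - b) / (a * a * b * c) := by
  field_simp
  ring

lemma dem_field_braid {K : Type*} [Field K] (a b c g0 g1 g2 g3 g4 g5 : K)
    (ha : a ≠ 0) (hb : b ≠ 0) (hc : c ≠ 0) (habc : a + b = c) :
    (((g5 - g4) / b - (g1 - g0) / a) / c - ((g3 - g2) / c - (g1 - g0) / a) / b) / a =
      (((g5 - g3) / a - (g2 - g0) / b) / c - ((g4 - g1) / c - (g2 - g0) / b) / a) / b := by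
  have h1 : c - b = a := by rw [← habc]; ring
  have h2 : c - a = b := by rw [← habc]; ring
  rw [dem_expand_side a b c _ _ _ ha hb hc, dem_expand_side b a c _ _ _ hb ha hc, h1, h2]
  have e1 : (g1 - g0) * a / (a * a * b * c) = (g1 - g0) / (a * b * c) := by
    rw [mul_comm (g1 - g0) a, show a * a * b * c = a * (a * b * c) by ring,
      mul_div_mul_left _ _ ha]
  have e2 : (g2 - g0) * b / (b * b * a * c) = (g2 - g0) / (b * a * c) := by
    rw [mul_comm (g2 - g0) b, show b * b * a * c = b * (b * a * c) by ring,
      mul_div_mul_left _ _ hb]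
  rw [e1, e2, ← add_div, ← add_div,
    show b * a * c = a * b * c by ring,
    show g5 - g4 - (g3 - g2) + (g1 - g0) = g5 - g3 - (g4 - g1) + (g2 - g0) by ring]

lemma dem_field_comm {K : Type*} [Field K] (a b g0 g1 g2 g3 : K)
    (ha : a ≠ 0) (hb : b ≠ 0) :
    ((g3 - g1) / b - (g2 - g0) / b) / a = ((g3 - g2) / a - (g1 - g0) / a) / b := by
  field_simp
  ring

lemma dem_field_braid' {K : Type*} [Field K] (A B C g0 g1 g2 g3 g4 g5 : K)
    (ha : A - B ≠ 0) (hb : B - C ≠ 0) (hc : A - C ≠ 0) :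
    (((g5 - g4) / (B - C) - (g0 - g1) / (B - A)) / (A - C) -
        ((g3 - g2) / (A - C) - (g1 - g0) / (A - B)) / (B - C)) / (A - B) =
      (((g5 - g3) / (A - B) - (g0 - g2) / (C - B)) / (A - C) -
        ((g4 - g1) / (A - C) - (g2 - g0) / (B - C)) / (A - B)) / (B - C) := by
  have e1 : (g0 - g1) / (B - A) = (g1 - g0) / (A - B) := by
    rw [← neg_sub g1 g0, ← neg_sub A B, neg_div_neg_eq]
  have e2 : (g0 - g2) / (C - B) = (g2 - g0) / (B - C) := by
    rw [← neg_sub g2 g0, ← neg_sub B C, neg_div_neg_eq]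
  rw [e1, e2]
  exact dem_field_braid (A - B) (B - C) (A - C) g0 g1 g2 g3 g4 g5 ha hb hc (by ring)

end DemazureAux11

/-- the Demazure operators satisfy the nil Coxeter relations:
`δ_i² = 0`, `δ_i δ_{i+1} δ_i = δ_{i+1} δ_i δ_{i+1}`, and `δ_i δ_j = δ_j δ_i` for
`|i − j| ≥ 2`.  (Here `R = ℂ[x_1,…,x_{n+1}]` and, for `i : Fin n`, `δ_i = D i` is
the map determined by `δ_i(f)·(x_i − x_{i+1}) = s_i•f − f` with
`s_i = Equiv.swap i.castSucc i.succ`.) -/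
theorem demazure_nil_coxeter_relations (n : ℕ)
    (D : Fin n → (MvPolynomial (Fin (n + 1)) ℂ → MvPolynomial (Fin (n + 1)) ℂ))
    (hD : ∀ (i : Fin n) (f : MvPolynomial (Fin (n + 1)) ℂ),
      D i f * (X i.castSucc - X i.succ) =
        rename (⇑(Equiv.swap i.castSucc i.succ)) f - f) :
    -- (a) δ_i ∘ δ_i = 0
    (∀ (i : Fin n) (f : MvPolynomial (Fin (n + 1)) ℂ), D i (D i f) = 0) ∧
    -- (b) δ_i ∘ δ_{i+1} ∘ δ_i = δ_{i+1} ∘ δ_i ∘ δ_{i+1}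
    (∀ (i j : Fin n), (j : ℕ) = (i : ℕ) + 1 →
      ∀ f : MvPolynomial (Fin (n + 1)) ℂ,
        D i (D j (D i f)) = D j (D i (D j f))) ∧
    -- (c) δ_i ∘ δ_j = δ_j ∘ δ_i whenever |i − j| ≥ 2
    (∀ (i j : Fin n), (i : ℕ) + 2 ≤ (j : ℕ) ∨ (j : ℕ) + 2 ≤ (i : ℕ) →
      ∀ f : MvPolynomial (Fin (n + 1)) ℂ, D i (D j f) = D j (D i f)) := by
  classical
  have hinj := IsFractionRing.injective (MvPolynomial (Fin (n + 1)) ℂ)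
    (FractionRing (MvPolynomial (Fin (n + 1)) ℂ))
  refine ⟨?_, ?_, ?_⟩
  · -- (a)
    intro i f
    apply hinj
    rw [map_zero]
    have hxy : i.castSucc ≠ i.succ := (Fin.castSucc_lt_succ : i.castSucc < i.succ).ne
    have ha := DemazureAux11.demι_sub_ne hxy
    have hba := DemazureAux11.demι_sub_ne hxy.symm
    have h1 := DemazureAux11.demazure_key1 D hD i f
    have h6 := DemazureAux11.demazure_key D hD i (Equiv.swap i.castSucc i.succ) f
    simp only [Equiv.swap_mul_self, Equiv.Perm.coe_one, rename_id, AlgHom.id_apply,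
      Equiv.swap_apply_left, Equiv.swap_apply_right] at h6
    have hL := DemazureAux11.demazure_key1 D hD i (D i f)
    rw [h6, h1] at hL
    rw [hL]
    rw [div_eq_zero_iff]
    left
    rw [sub_eq_zero, div_eq_div_iff hba ha]
    ring
  · -- (b)
    intro i j hij f
    apply hinj
    have hjc : j.castSucc = i.succ := by simp [Fin.ext_iff, hij]
    have hxy : i.castSucc ≠ i.succ := (Fin.castSucc_lt_succ : i.castSucc < i.succ).ne
    have hyz : i.succ ≠ j.succ := by
      simp only [Ne, Fin.ext_iff, Fin.val_succ]; omega
    have hxz : i.castSucc ≠ j.succ := by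
      simp only [Ne, Fin.ext_iff, Fin.coe_castSucc, Fin.val_succ]; omega
    have hs_z : Equiv.swap i.castSucc i.succ j.succ = j.succ :=
      Equiv.swap_apply_of_ne_of_ne (Ne.symm hxz) (Ne.symm hyz)
    have ht_x : Equiv.swap i.succ j.succ i.castSucc = i.castSucc :=
      Equiv.swap_apply_of_ne_of_ne hxy hxz
    have hss : Equiv.swap i.castSucc i.succ * Equiv.swap i.castSucc i.succ = 1 :=
      Equiv.swap_mul_self _ _
    have htt : Equiv.swap i.succ j.succ * Equiv.swap i.succ j.succ = 1 :=
      Equiv.swap_mul_self _ _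
    have hb2 : Equiv.swap i.succ j.succ * Equiv.swap i.castSucc i.succ *
        Equiv.swap i.succ j.succ = Equiv.swap i.castSucc j.succ := by
      rw [Equiv.swap_mul_swap_mul_swap hxy hxz]
      exact Equiv.swap_comm _ _
    have hb1 : Equiv.swap i.castSucc i.succ * Equiv.swap i.succ j.succ *
        Equiv.swap i.castSucc i.succ = Equiv.swap i.castSucc j.succ := by
      have h := Equiv.swap_mul_swap_mul_swap (Ne.symm hyz) (Ne.symm hxz)
      rwa [Equiv.swap_comm i.succ i.castSucc, Equiv.swap_comm j.succ i.succ] at h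
    -- nonzero denominators
    have ha := DemazureAux11.demι_sub_ne hxy
    have hb := DemazureAux11.demι_sub_ne hyz
    have hc := DemazureAux11.demι_sub_ne hxz
    have hba := DemazureAux11.demι_sub_ne hxy.symm
    have hcb := DemazureAux11.demι_sub_ne hyz.symm
    -- value computations
    have h1 := DemazureAux11.demazure_key1 D hD i f
    have h1' := DemazureAux11.demazure_key1 D hD j f
    rw [hjc] at h1'
    have h2 := DemazureAux11.demazure_key D hD i (Equiv.swap i.succ j.succ) f
    simp only [Equiv.swap_apply_left, ht_x] at h2
    have h3 := DemazureAux11.demazure_key1 D hD j (D i f)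
    rw [hjc] at h3
    rw [h2, h1] at h3
    have h5 := DemazureAux11.demazure_key D hD i
      (Equiv.swap i.castSucc i.succ * Equiv.swap i.succ j.succ) f
    simp only [hb1, Equiv.Perm.mul_apply, Equiv.swap_apply_left, ht_x, hs_z] at h5
    have h6 := DemazureAux11.demazure_key D hD i (Equiv.swap i.castSucc i.succ) f
    simp only [hss, Equiv.Perm.coe_one, rename_id, Equiv.swap_apply_left,
      Equiv.swap_apply_right] at h6
    have h4 := DemazureAux11.demazure_key D hD j (Equiv.swap i.castSucc i.succ) (D i f)
    rw [hjc] at h4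
    simp only [Equiv.swap_apply_right, hs_z] at h4
    rw [h5, h6] at h4
    have hL := DemazureAux11.demazure_key1 D hD i (D j (D i f))
    rw [h4, h3] at hL
    have h2' := DemazureAux11.demazure_key D hD j (Equiv.swap i.castSucc i.succ) f
    rw [hjc] at h2'
    simp only [Equiv.swap_apply_right, hs_z] at h2'
    have h3' := DemazureAux11.demazure_key1 D hD i (D j f)
    rw [h2', h1'] at h3'
    have h5' := DemazureAux11.demazure_key D hD j
      (Equiv.swap i.succ j.succ * Equiv.swap i.castSucc i.succ) f
    rw [hjc] at h5'
    simp only [hb2, Equiv.Perm.mul_apply, Equiv.swap_apply_right, ht_x, hs_z] at h5'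
    have h6' := DemazureAux11.demazure_key D hD j (Equiv.swap i.succ j.succ) f
    rw [hjc] at h6'
    simp only [htt, Equiv.Perm.coe_one, rename_id, Equiv.swap_apply_left,
      Equiv.swap_apply_right] at h6'
    have h4' := DemazureAux11.demazure_key D hD i (Equiv.swap i.succ j.succ) (D j f)
    simp only [Equiv.swap_apply_left, ht_x] at h4'
    rw [h5', h6'] at h4'
    have hR := DemazureAux11.demazure_key1 D hD j (D i (D j f))
    rw [hjc] at hR
    rw [h4', h3'] at hR
    rw [hL, hR]

    exact DemazureAux11.dem_field_braid' _ _ _ _ _ _ _ _ _ ha hb hc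
  · -- (c)
    intro i j hsep f
    apply hinj
    have hxy : i.castSucc ≠ i.succ := (Fin.castSucc_lt_succ : i.castSucc < i.succ).ne
    have huv : j.castSucc ≠ j.succ := (Fin.castSucc_lt_succ : j.castSucc < j.succ).ne
    have hxu : i.castSucc ≠ j.castSucc := by
      simp only [Ne, Fin.ext_iff, Fin.coe_castSucc]; omega
    have hxv : i.castSucc ≠ j.succ := by
      simp only [Ne, Fin.ext_iff, Fin.coe_castSucc, Fin.val_succ]; omega
    have hyu : i.succ ≠ j.castSucc := by
      simp only [Ne, Fin.ext_iff, Fin.coe_castSucc, Fin.val_succ]; omega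
    have hyv : i.succ ≠ j.succ := by
      simp only [Ne, Fin.ext_iff, Fin.val_succ]; omega
    have hsu : Equiv.swap i.castSucc i.succ j.castSucc = j.castSucc :=
      Equiv.swap_apply_of_ne_of_ne (Ne.symm hxu) (Ne.symm hyu)
    have hsv : Equiv.swap i.castSucc i.succ j.succ = j.succ :=
      Equiv.swap_apply_of_ne_of_ne (Ne.symm hxv) (Ne.symm hyv)
    have htx : Equiv.swap j.castSucc j.succ i.castSucc = i.castSucc :=
      Equiv.swap_apply_of_ne_of_ne hxu hxv
    have hty : Equiv.swap j.castSucc j.succ i.succ = i.succ :=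
      Equiv.swap_apply_of_ne_of_ne hyu hyv
    have hcomm : Equiv.swap j.castSucc j.succ * Equiv.swap i.castSucc i.succ =
        Equiv.swap i.castSucc i.succ * Equiv.swap j.castSucc j.succ := by
      ext k
      simp only [Equiv.Perm.mul_apply, Equiv.swap_apply_def]
      split_ifs <;> simp_all
    have ha := DemazureAux11.demι_sub_ne hxy
    have hb := DemazureAux11.demι_sub_ne huv
    have h1 := DemazureAux11.demazure_key1 D hD i f
    have h1' := DemazureAux11.demazure_key1 D hD j f
    have h2 := DemazureAux11.demazure_key D hD i (Equiv.swap j.castSucc j.succ) f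
    simp only [htx, hty, hcomm] at h2
    have h2' := DemazureAux11.demazure_key D hD j (Equiv.swap i.castSucc i.succ) f
    simp only [hsu, hsv] at h2'
    have hL := DemazureAux11.demazure_key1 D hD i (D j f)
    rw [h2', h1'] at hL
    have hR := DemazureAux11.demazure_key1 D hD j (D i f)
    rw [h2, h1] at hR
    rw [hL, hR]
    exact DemazureAux11.dem_field_comm _ _ _ _ _ _ ha hb
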